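/- In SL₂ over a commutative ring, the Fricke trace identity holds: for any A, B ∈ SL₂(R), (tr A)² + (tr B)² + (tr AB)² = (tr A)(tr B)(tr AB) + tr(ABA^{-1}B^{-1}) + 2. -/
import Mathlib


open Matrix

/-- The Fricke trace identity in `SL₂(R)`:
`(tr A)² + (tr B)² + (tr AB)² = (tr A)(tr B)(tr AB) + tr [A,B] + 2`. -/
theorem stmt13 (R : Type*) [CommRing R]
    (A B : Matrix.SpecialLinearGroup (Fin 2) R) :
    (Matrix.trace (A : Matrix (Fin 2) (Fin 2) R)) ^ 2 +
      (Matrix.trace (B : Matrix (Fin 2) (Fin 2) R)) ^ 2 +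
      (Matrix.trace ((A * B : Matrix.SpecialLinearGroup (Fin 2) R) :
        Matrix (Fin 2) (Fin 2) R)) ^ 2 =
    Matrix.trace (A : Matrix (Fin 2) (Fin 2) R) *
      Matrix.trace (B : Matrix (Fin 2) (Fin 2) R) *
      Matrix.trace ((A * B : Matrix.SpecialLinearGroup (Fin 2) R) :
        Matrix (Fin 2) (Fin 2) R) +
    Matrix.trace ((A * B * A⁻¹ * B⁻¹ : Matrix.SpecialLinearGroup (Fin 2) R) :
      Matrix (Fin 2) (Fin 2) R) + 2 := by
  have hA := A.prop
  have hB := B.prop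
  rw [Matrix.det_fin_two] at hA hB
  set a := (A : Matrix (Fin 2) (Fin 2) R) 0 0 with ha
  set b := (A : Matrix (Fin 2) (Fin 2) R) 0 1 with hb
  set c := (A : Matrix (Fin 2) (Fin 2) R) 1 0 with hc
  set d := (A : Matrix (Fin 2) (Fin 2) R) 1 1 with hd
  set e := (B : Matrix (Fin 2) (Fin 2) R) 0 0 with he
  set f := (B : Matrix (Fin 2) (Fin 2) R) 0 1 with hf
  set g := (B : Matrix (Fin 2) (Fin 2) R) 1 0 with hg
  set h := (B : Matrix (Fin 2) (Fin 2) R) 1 1 with hh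
  simp only [Matrix.SpecialLinearGroup.coe_mul, Matrix.SpecialLinearGroup.coe_inv,
    Matrix.adjugate_fin_two, Matrix.trace_fin_two, Matrix.mul_apply, Fin.sum_univ_two,
    Matrix.of_apply, Matrix.cons_val', Matrix.cons_val_zero, Matrix.cons_val_one,
    Matrix.head_cons, Matrix.empty_val', Matrix.cons_val_fin_one, Matrix.head_fin_const,
    ← ha, ← hb, ← hc, ← hd, ← he, ← hf, ← hg, ← hh]
  linear_combination (2 - e^2 - 2*e*h - h^2) * hA + (-a^2 - 2*b*c - d^2) * hB
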